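/- Let λ > 0, δ > 0, θ ∈ ℝ, and let b₁ ≥ b₂ ≥ … ≥ b_m be reals with b_{i−1} ≥ b_i + δ for 2 ≤ i ≤ m and b_{m−1} ≥ θ + 1 (when m ≥ 2). Then Σ_{i=2}^{m} ρ⊤_{λ,θ}(b_i) ≤ (1/λ) + (1/λ)·(1/(1 − e^{−δ/λ})) = (1/λ)·(2e^{δ/λ} − 1)/(e^{δ/λ} − 1), where ρ⊤_{λ,θ}(x) = 1/λ for x < θ+1 and (1/λ)e^{(θ+1−x)/λ} otherwise. -/

import Mathlib

open scoped BigOperators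

/-- `ρ⊤_{λ,θ}(x) = 1/λ` for `x < θ + 1`, and `(1/λ)e^{(θ+1-x)/λ}` otherwise. -/
noncomputable def rhoTop (l θ x : ℝ) : ℝ :=
  if x < θ + 1 then 1 / l else (1 / l) * Real.exp ((θ + 1 - x) / l)

/-- The geometric-series bound of the PrivTree privacy proof: if the biased counts
`b₁ ≥ b₂ ≥ … ≥ b_m` decrease by at least `δ` at each step and `b_{m-1} ≥ θ + 1`
(when `m ≥ 2`), then `Σ_{i=2}^m ρ⊤_{λ,θ}(b_i) ≤ 1/λ + (1/λ)·1/(1 - e^{-δ/λ})`,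
which equals `(1/λ)·(2e^{δ/λ} - 1)/(e^{δ/λ} - 1)`. -/
theorem stmt_7 (l δ θ : ℝ) (hl : 0 < l) (hδ : 0 < δ) (m : ℕ) (b : ℕ → ℝ)
    (hdec : ∀ i : ℕ, 2 ≤ i → i ≤ m → b i + δ ≤ b (i - 1))
    (hlast : 2 ≤ m → θ + 1 ≤ b (m - 1)) :
    (∑ i ∈ Finset.Icc 2 m, rhoTop l θ (b i)) ≤
      1 / l + (1 / l) * (1 / (1 - Real.exp (-δ / l))) ∧
    1 / l + (1 / l) * (1 / (1 - Real.exp (-δ / l))) =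
      (1 / l) * (2 * Real.exp (δ / l) - 1) / (Real.exp (δ / l) - 1) := by
  have hE1 : (1 : ℝ) < Real.exp (δ / l) := by
    rw [show (1:ℝ) = Real.exp 0 from (Real.exp_zero).symm]
    exact Real.exp_lt_exp.mpr (by positivity)
  have hE1' : Real.exp (δ / l) ≠ 1 := ne_of_gt hE1
  set r := Real.exp (-δ / l) with hrdef
  have hr0 : 0 < r := Real.exp_pos _
  have hr1 : r < 1 := by
    have : -δ / l < 0 := by
      apply div_neg_of_neg_of_pos <;> linarith
    exact Real.exp_lt_one_iff.mpr this
  have h1r : 0 < 1 - r := by linarith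
  constructor
  · -- chain lemma
    have hchain : ∀ d i : ℕ, 2 ≤ i → i + d ≤ m → b (i + d) + (d : ℝ) * δ ≤ b i := by
      intro d
      induction d with
      | zero => intro i _ _; simp
      | succ d ih =>
        intro i hi him
        have h1 := hdec (i + d + 1) (by omega) (by omega)
        have heq : i + d + 1 - 1 = i + d := by omega
        rw [heq] at h1
        have h2 := ih i hi (by omega)
        have heq2 : i + (d + 1) = i + d + 1 := by omega
        rw [heq2]
        push_cast
        linarith
    have hterm : ∀ i ∈ Finset.Icc 2 m,
        rhoTop l θ (b i) ≤ (1 / l) * r ^ (m - 1 - i) := by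
      intro i hi
      rw [Finset.mem_Icc] at hi
      by_cases him : i = m
      · rw [him]
        have h0 : m - 1 - m = 0 := by omega
        rw [h0, pow_zero, mul_one]
        unfold rhoTop
        split
        · exact le_rfl
        · rename_i hb
          have hb' : θ + 1 ≤ b m := not_lt.mp hb
          have hx : (θ + 1 - b m) / l ≤ 0 := by
            apply div_nonpos_of_nonpos_of_nonneg <;> linarith
          have h1 : Real.exp ((θ + 1 - b m) / l) ≤ 1 := Real.exp_le_one_iff.mpr hx
          calc (1 / l) * Real.exp ((θ + 1 - b m) / l) ≤ (1 / l) * 1 := by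
                apply mul_le_mul_of_nonneg_left h1 (by positivity)
            _ = 1 / l := mul_one _
      · have hm2 : 2 ≤ m := by omega
        have hc := hchain (m - 1 - i) i hi.1 (by omega)
        have hidx : i + (m - 1 - i) = m - 1 := by omega
        rw [hidx] at hc
        have hlast' := hlast hm2
        have hd0 : (0:ℝ) ≤ ((m - 1 - i : ℕ) : ℝ) := Nat.cast_nonneg _
        have hb : θ + 1 ≤ b i := by nlinarith
        unfold rhoTop
        rw [if_neg (not_lt.mpr hb)]
        have hrexp : r ^ (m - 1 - i) = Real.exp (((m - 1 - i : ℕ) : ℝ) * (-δ / l)) := by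
          rw [hrdef, ← Real.exp_nat_mul]
        rw [hrexp]
        apply mul_le_mul_of_nonneg_left _ (by positivity)
        apply Real.exp_le_exp.mpr
        rw [← mul_div_assoc]
        gcongr
        nlinarith
    calc (∑ i ∈ Finset.Icc 2 m, rhoTop l θ (b i))
        ≤ ∑ i ∈ Finset.Icc 2 m, (1 / l) * r ^ (m - 1 - i) :=
          Finset.sum_le_sum hterm
      _ ≤ 1 / l + (1 / l) * (1 / (1 - r)) := by
          by_cases hm2 : 2 ≤ m
          · have hm : m = (m - 1) + 1 := by omega
            rw [hm, Finset.sum_Icc_succ_top (by omega)]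
            simp only [Nat.add_sub_cancel]
            have hmain : ∑ i ∈ Finset.Icc 2 (m - 1), (1 / l) * r ^ (m - 1 - i)
                ≤ (1 / l) * (1 / (1 - r)) := by
              rw [← Finset.mul_sum]
              apply mul_le_mul_of_nonneg_left _ (by positivity)
              have himg : ∑ i ∈ Finset.Icc 2 (m - 1), r ^ (m - 1 - i)
                  = ∑ k ∈ (Finset.Icc 2 (m - 1)).image (fun i => m - 1 - i), r ^ k := by
                rw [Finset.sum_image]
                intro x hx y hy hxy
                rw [Finset.mem_coe, Finset.mem_Icc] at hx hy
                beta_reduce at hxy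
                omega
              rw [himg]
              calc ∑ k ∈ (Finset.Icc 2 (m - 1)).image (fun i => m - 1 - i), r ^ k
                  ≤ ∑ k ∈ Finset.range (m - 1), r ^ k := by
                    apply Finset.sum_le_sum_of_subset_of_nonneg
                    · intro k hk
                      simp only [Finset.mem_image, Finset.mem_Icc] at hk
                      rw [Finset.mem_range]
                      omega
                    · intro k _ _; positivity
                _ ≤ 1 / (1 - r) := by
                    rw [geom_sum_eq (ne_of_lt hr1)]
                    have hrw : (r ^ (m - 1) - 1) / (r - 1) = (1 - r ^ (m - 1)) / (1 - r) := by
                      rw [div_eq_div_iff (by linarith) (by linarith)]; ring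
                    rw [hrw]
                    have hp : (0:ℝ) ≤ r ^ (m - 1) := by positivity
                    gcongr
                    linarith
            have h0 : m - 1 - (m - 1 + 1) = 0 := by omega
            rw [h0, pow_zero, mul_one]
            linarith
          · have : Finset.Icc 2 m = ∅ := by
              apply Finset.Icc_eq_empty; omega
            rw [this, Finset.sum_empty]
            positivity
  · have hinv : r = (Real.exp (δ / l))⁻¹ := by
      rw [hrdef, neg_div, Real.exp_neg]
    have hE0 : (0:ℝ) < Real.exp (δ / l) := Real.exp_pos _
    have h1r' : (1:ℝ) - r = (Real.exp (δ / l) - 1) / Real.exp (δ / l) := by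
      rw [hinv]; field_simp
    have hE1'' : Real.exp (δ / l) - 1 ≠ 0 := by linarith
    rw [h1r', one_div_div]
    field_simp
    ring
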